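/- G(Σ, e) is the internal direct sum ⟨3Ψ_t⟩ ⊕ ⟨mΨ_t⟩ ⊕ ⨁_{i=1}^{2^ν−2} ⟨Ψ_{t_i} − Ψ_t⟩, where the subgroup ⟨3Ψ_t⟩ is cyclic of order m, the subgroup ⟨mΨ_t⟩ is cyclic of order 3, and each subgroup ⟨Ψ_{t_i} − Ψ_t⟩ for 1 ≤ i ≤ 2^ν − 2 is cyclic of order 3. -/

import Mathlib

/-- The subgroup of relations: `e s • ψ s - e t • ψ t` for all `s t`, together with
`∑ s, ψ s`. -/
noncomputable def relSub {S : Type*} [Fintype S] (e : S → ℤ) : AddSubgroup (S →₀ ℤ) :=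
  AddSubgroup.closure
    ({x | ∃ s t : S, x = Finsupp.single s (e s) - Finsupp.single t (e t)} ∪
      {∑ s : S, Finsupp.single s 1})

/-- `G(Σ, e)`: the quotient of the free abelian group on `Σ` by the relations. -/
abbrev CompGrp {S : Type*} [Fintype S] (e : S → ℤ) : Type _ :=
  (S →₀ ℤ) ⧸ relSub e

/-- `Ψ s`: the image of the basis element `ψ s` in `G(Σ, e)`. -/
noncomputable def Psi {S : Type*} [Fintype S] (e : S → ℤ) (s : S) : CompGrp e :=
  QuotientAddGroup.mk (Finsupp.single s 1)

/-- `Σ = Σ₂ ⊔ Σ₆` with `#Σ₂ = s₂` and `#Σ₆ = 2^ν`. -/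
abbrev Sig2 (s₂ ν : ℕ) : Type := Fin s₂ ⊕ Fin (2 ^ ν)

/-- `e ≡ 1` on `Σ₂` and `e ≡ 3` on `Σ₆`. -/
def e2 (s₂ ν : ℕ) : Sig2 s₂ ν → ℤ := Sum.elim (fun _ => 1) (fun _ => 3)

/-- `t i` (`1`-based): the `i`-th point of `Σ₆ = {t_1, …, t_{2^ν}}`. -/
def tPt (s₂ ν : ℕ) (i : ℕ) : Sig2 s₂ ν :=
  Sum.inr ⟨(i - 1) % 2 ^ ν, Nat.mod_lt _ (by positivity)⟩

/-- The generators `v_j` (`1`-based, `v_0 := Ψ 𝔰`):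
`v_{2k-1} = Ψ t_{2k-1} - Ψ t_{2k}` and `v_{2k} = Ψ t_{2k-1} + Ψ t_{2k} - Ψ t - Ψ t'`,
where `t = t_{2^ν - 1}` and `t' = t_{2^ν}`. -/
noncomputable def vGen (s₂ ν : ℕ) (𝔰 : Fin s₂) : ℕ → CompGrp (e2 s₂ ν) := fun j =>
  if j = 0 then Psi (e2 s₂ ν) (Sum.inl 𝔰)
  else if j % 2 = 1 then
    Psi (e2 s₂ ν) (tPt s₂ ν j) - Psi (e2 s₂ ν) (tPt s₂ ν (j + 1))
  else
    Psi (e2 s₂ ν) (tPt s₂ ν (j - 1)) + Psi (e2 s₂ ν) (tPt s₂ ν j)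
      - Psi (e2 s₂ ν) (tPt s₂ ν (2 ^ ν - 1)) - Psi (e2 s₂ ν) (tPt s₂ ν (2 ^ ν))

/-- Generators for the decomposition of STATEMENT 6: `c_0 = 3Ψt`, `c_1 = mΨt`, and
`c_j = Ψ t_{j-1} - Ψ t` for `2 ≤ j ≤ 2^ν - 1` (so the `⟨c_j⟩` for `2 ≤ j` run over
`⟨Ψ t_i - Ψ t⟩` for `1 ≤ i ≤ 2^ν - 2`), where `t = t_{2^ν - 1}`. -/
noncomputable def cGen (s₂ ν : ℕ) : ℕ → CompGrp (e2 s₂ ν) := fun j =>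
  if j = 0 then (3 : ℕ) • Psi (e2 s₂ ν) (tPt s₂ ν (2 ^ ν - 1))
  else if j = 1 then (3 * s₂ + 2 ^ ν) • Psi (e2 s₂ ν) (tPt s₂ ν (2 ^ ν - 1))
  else Psi (e2 s₂ ν) (tPt s₂ ν (j - 1)) - Psi (e2 s₂ ν) (tPt s₂ ν (2 ^ ν - 1))

-- auxiliary
def mm (s₂ ν : ℕ) : ℕ := 3 * s₂ + 2 ^ ν

abbrev Tgt (s₂ ν : ℕ) : Type := ZMod (mm s₂ ν) × ZMod 3 × (Fin (2 ^ ν) → ZMod 3)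

noncomputable def al (s₂ ν : ℕ) : ZMod (mm s₂ ν) := (3 : ZMod (mm s₂ ν))⁻¹
noncomputable def be (s₂ ν : ℕ) : ZMod 3 := ((mm s₂ ν : ZMod 3))⁻¹

def dl (ν : ℕ) (j : Fin (2 ^ ν)) : Fin (2 ^ ν) → ZMod 3 := fun k =>
  if (j : ℕ) < 2 ^ ν - 2 ∧ j = k then 1
  else if (j : ℕ) = 2 ^ ν - 1 ∧ (k : ℕ) < 2 ^ ν - 2 then -1 else 0

noncomputable def Tval (s₂ ν : ℕ) : Sig2 s₂ ν → Tgt s₂ ν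
  | .inl _ => (1, 0, 0)
  | .inr j => (al s₂ ν, (if (j : ℕ) = 2 ^ ν - 1 then be s₂ ν - 1 else be s₂ ν), dl ν j)

noncomputable def phi (s₂ ν : ℕ) : (Sig2 s₂ ν →₀ ℤ) →+ Tgt s₂ ν :=
  Finsupp.liftAddHom (fun s => zmultiplesHom _ (Tval s₂ ν s))

lemma coprime3 (s₂ ν : ℕ) : Nat.Coprime 3 (mm s₂ ν) := by
  have h2 : Nat.Coprime 3 (2 ^ ν) := (by decide : Nat.Coprime 3 2).pow_right ν
  have : mm s₂ ν = 2 ^ ν + 3 * s₂ := by unfold mm; ring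
  rw [this]
  exact (Nat.coprime_add_mul_left_right 3 (2 ^ ν) s₂).2 h2

lemma mm_ge (s₂ ν : ℕ) (hs : 1 ≤ s₂) (hν : 1 ≤ ν) : 5 ≤ mm s₂ ν := by
  have h2 : 2 ≤ 2 ^ ν := by
    calc 2 = 2 ^ 1 := rfl
    _ ≤ 2 ^ ν := Nat.pow_le_pow_right (by norm_num) hν
  unfold mm; omega

lemma three_mul_al (s₂ ν : ℕ) (hs : 1 ≤ s₂) (hν : 1 ≤ ν) :
    (3 : ZMod (mm s₂ ν)) * al s₂ ν = 1 := by
  have h5 := mm_ge s₂ ν hs hν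
  have h3 : ((3 : ℕ) : ZMod (mm s₂ ν)) = (3 : ZMod (mm s₂ ν)) := by push_cast; ring
  have := ZMod.mul_inv_eq_gcd ((3 : ℕ) : ZMod (mm s₂ ν))
  rw [ZMod.val_natCast, Nat.mod_eq_of_lt (by omega)] at this
  rw [al, ← h3, this, coprime3 s₂ ν, Nat.cast_one]

lemma mm_cast3 (s₂ ν : ℕ) : ((mm s₂ ν : ℕ) : ZMod 3) = (-1 : ZMod 3) ^ ν := by
  unfold mm
  push_cast
  have : (3 : ZMod 3) = 0 := by decide
  rw [this]
  have h2 : (2 : ZMod 3) = -1 := by decide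
  rw [h2]; ring

lemma mm_mul_be (s₂ ν : ℕ) : ((mm s₂ ν : ℕ) : ZMod 3) * be s₂ ν = 1 := by
  have hne : ((mm s₂ ν : ℕ) : ZMod 3) ≠ 0 := by
    rw [mm_cast3]
    exact pow_ne_zero _ (by decide)
  exact mul_inv_cancel₀ hne

lemma phi_single (s₂ ν : ℕ) (s : Sig2 s₂ ν) (k : ℤ) :
    phi s₂ ν (Finsupp.single s k) = k • Tval s₂ ν s := by
  unfold phi
  rw [Finsupp.liftAddHom_apply_single]
  rfl

lemma zsmul3 (x : ZMod 3) : (3 : ℤ) • x = 0 := by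
  rw [zsmul_eq_mul]
  have : ((3 : ℤ) : ZMod 3) = 0 := by decide
  rw [this, zero_mul]

lemma phi_single_e (s₂ ν : ℕ) (hs : 1 ≤ s₂) (hν : 1 ≤ ν) (s : Sig2 s₂ ν) :
    phi s₂ ν (Finsupp.single s (e2 s₂ ν s)) = (1, 0, 0) := by
  rw [phi_single]
  cases s with
  | inl a => simp [e2, Tval]
  | inr j =>
    show (3 : ℤ) • Tval s₂ ν (Sum.inr j) = (1, 0, 0)
    unfold Tval
    refine Prod.ext ?_ (Prod.ext ?_ ?_)
    · show (3 : ℤ) • al s₂ ν = 1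
      rw [zsmul_eq_mul]
      push_cast
      exact three_mul_al s₂ ν hs hν
    · exact zsmul3 _
    · show (3 : ℤ) • dl ν j = 0
      funext k
      exact zsmul3 _

-- the last index (t') and the index of t
def lastF (ν : ℕ) : Fin (2 ^ ν) := ⟨2 ^ ν - 1, Nat.sub_lt (by positivity) (by norm_num)⟩
def jt (ν : ℕ) : Fin (2 ^ ν) := ⟨2 ^ ν - 2, Nat.sub_lt (by positivity) (by norm_num)⟩

lemma sum_dl (ν : ℕ) (k : Fin (2 ^ ν)) : ∑ j : Fin (2 ^ ν), dl ν j k = 0 := by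
  by_cases hk : (k : ℕ) < 2 ^ ν - 2
  · have hk_ne : k ≠ lastF ν := by
      intro h
      rw [h] at hk
      simp only [lastF] at hk
      omega
    rw [Finset.sum_eq_add_of_mem k (lastF ν) (Finset.mem_univ _) (Finset.mem_univ _) hk_ne]
    · have h1 : dl ν k k = 1 := by
        unfold dl
        rw [if_pos ⟨hk, rfl⟩]
      have h2 : dl ν (lastF ν) k = -1 := by
        unfold dl
        rw [if_neg, if_pos ⟨rfl, hk⟩]
        rintro ⟨h, -⟩
        simp only [lastF] at h
        have := k.isLt
        omega
      rw [h1, h2, add_neg_cancel]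
    · intro j _ ⟨hj1, hj2⟩
      unfold dl
      rw [if_neg, if_neg]
      · rintro ⟨h, -⟩
        exact hj2 (Fin.ext h)
      · rintro ⟨-, h⟩
        exact hj1 h
  · apply Finset.sum_eq_zero
    intro j _
    unfold dl
    rw [if_neg, if_neg]
    · rintro ⟨-, h⟩; exact hk h
    · rintro ⟨h1, h2⟩
      rw [h2] at h1
      exact hk h1

lemma sum_Tval (s₂ ν : ℕ) (hs : 1 ≤ s₂) (hν : 1 ≤ ν) :
    ∑ s : Sig2 s₂ ν, Tval s₂ ν s = 0 := by
  rw [Fintype.sum_sum_type]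
  refine Prod.ext ?_ (Prod.ext ?_ ?_)
  · -- first component
    simp only [Prod.fst_add, Prod.fst_sum]
    simp only [Tval]
    simp only [Finset.sum_const, Finset.card_univ, Fintype.card_fin]
    show (s₂ • (1 : ZMod (mm s₂ ν)) + 2 ^ ν • al s₂ ν) = (0 : Tgt s₂ ν).1
    have h3 := three_mul_al s₂ ν hs hν
    have key : (3 : ZMod (mm s₂ ν)) * (s₂ • (1 : ZMod (mm s₂ ν)) + 2 ^ ν • al s₂ ν) = 0 := by
      rw [mul_add, nsmul_eq_mul, nsmul_eq_mul, mul_one]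
      rw [mul_left_comm, h3, mul_one]
      have : (3 : ZMod (mm s₂ ν)) * (s₂ : ZMod (mm s₂ ν)) + (2 ^ ν : ℕ) =
          ((3 * s₂ + 2 ^ ν : ℕ) : ZMod (mm s₂ ν)) := by push_cast; ring
      rw [this]
      exact ZMod.natCast_self _
    have := congrArg (fun x => al s₂ ν * x) key
    simpa [← mul_assoc, mul_comm (al s₂ ν) 3, h3] using this
  · -- second component
    simp only [Prod.snd_add, Prod.fst_add, Prod.snd_sum, Prod.fst_sum]
    simp only [Tval]
    rw [Finset.sum_const_zero, zero_add]
    have hterm : ∀ j : Fin (2 ^ ν),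
        (if (j : ℕ) = 2 ^ ν - 1 then be s₂ ν - 1 else be s₂ ν) =
          be s₂ ν - (if j = lastF ν then 1 else 0) := by
      intro j
      by_cases h : (j : ℕ) = 2 ^ ν - 1
      · rw [if_pos h, if_pos (Fin.ext h)]
      · rw [if_neg h, if_neg (fun hh => h (by rw [hh]; rfl)), sub_zero]
    rw [Finset.sum_congr rfl (fun j _ => hterm j), Finset.sum_sub_distrib,
      Finset.sum_const, Finset.card_univ, Fintype.card_fin,
      Finset.sum_ite_eq' Finset.univ (lastF ν) (fun _ => (1 : ZMod 3)),
      if_pos (Finset.mem_univ _)]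
    have hcast : (2 ^ ν : ℕ) • be s₂ ν = 1 := by
      rw [nsmul_eq_mul]
      have : ((2 ^ ν : ℕ) : ZMod 3) = ((mm s₂ ν : ℕ) : ZMod 3) := by
        unfold mm
        push_cast
        have : (3 : ZMod 3) = 0 := by decide
        rw [this]; ring
      rw [this, mm_mul_be]
    show (2 ^ ν : ℕ) • be s₂ ν - 1 = (0 : Tgt s₂ ν).2.1
    rw [hcast]
    simp
  · -- third component
    simp only [Prod.snd_add, Prod.snd_sum]
    simp only [Tval]
    rw [Finset.sum_const_zero, zero_add]
    show (∑ j : Fin (2 ^ ν), dl ν j) = (0 : Tgt s₂ ν).2.2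
    funext k
    rw [Finset.sum_apply]
    exact sum_dl ν k

lemma rel_le_ker (s₂ ν : ℕ) (hs : 1 ≤ s₂) (hν : 1 ≤ ν) :
    relSub (e2 s₂ ν) ≤ (phi s₂ ν).ker := by
  rw [relSub, AddSubgroup.closure_le]
  rintro x (⟨s, t, rfl⟩ | hx)
  · rw [SetLike.mem_coe, AddMonoidHom.mem_ker, map_sub,
      phi_single_e s₂ ν hs hν, phi_single_e s₂ ν hs hν, sub_self]
  · rw [Set.mem_singleton_iff] at hx
    subst hx
    rw [SetLike.mem_coe, AddMonoidHom.mem_ker, map_sum]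
    have : ∀ s : Sig2 s₂ ν, phi s₂ ν (Finsupp.single s 1) = Tval s₂ ν s := by
      intro s; rw [phi_single, one_smul]
    rw [Finset.sum_congr rfl (fun s _ => this s)]
    exact sum_Tval s₂ ν hs hν

noncomputable def phiBar (s₂ ν : ℕ) (hs : 1 ≤ s₂) (hν : 1 ≤ ν) :
    CompGrp (e2 s₂ ν) →+ Tgt s₂ ν :=
  QuotientAddGroup.lift _ (phi s₂ ν) (rel_le_ker s₂ ν hs hν)

lemma phiBar_Psi (s₂ ν : ℕ) (hs : 1 ≤ s₂) (hν : 1 ≤ ν) (s : Sig2 s₂ ν) :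
    phiBar s₂ ν hs hν (Psi (e2 s₂ ν) s) = Tval s₂ ν s := by
  show QuotientAddGroup.lift _ (phi s₂ ν) _ (QuotientAddGroup.mk (Finsupp.single s 1)) = _
  rw [QuotientAddGroup.lift_mk, phi_single, one_smul]

-- in-group relations
lemma rel1 (s₂ ν : ℕ) (s t : Sig2 s₂ ν) :
    (e2 s₂ ν s) • Psi (e2 s₂ ν) s = (e2 s₂ ν t) • Psi (e2 s₂ ν) t := by
  have hmem : Finsupp.single s (e2 s₂ ν s) - Finsupp.single t (e2 s₂ ν t) ∈ relSub (e2 s₂ ν) :=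
    AddSubgroup.subset_closure (Or.inl ⟨s, t, rfl⟩)
  have h0 : (QuotientAddGroup.mk (Finsupp.single s (e2 s₂ ν s) - Finsupp.single t (e2 s₂ ν t)) :
      CompGrp (e2 s₂ ν)) = 0 := (QuotientAddGroup.eq_zero_iff _).2 hmem
  have hs' : (QuotientAddGroup.mk (Finsupp.single s (e2 s₂ ν s)) : CompGrp (e2 s₂ ν)) =
      (e2 s₂ ν s) • Psi (e2 s₂ ν) s := by
    rw [Psi, ← QuotientAddGroup.mk_zsmul, Finsupp.smul_single, smul_eq_mul, mul_one]
  have ht' : (QuotientAddGroup.mk (Finsupp.single t (e2 s₂ ν t)) : CompGrp (e2 s₂ ν)) =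
      (e2 s₂ ν t) • Psi (e2 s₂ ν) t := by
    rw [Psi, ← QuotientAddGroup.mk_zsmul, Finsupp.smul_single, smul_eq_mul, mul_one]
  rw [QuotientAddGroup.mk_sub, hs', ht', sub_eq_zero] at h0
  exact h0

lemma rel_sum (s₂ ν : ℕ) : ∑ s : Sig2 s₂ ν, Psi (e2 s₂ ν) s = 0 := by
  have hmem : (∑ s : Sig2 s₂ ν, Finsupp.single s (1 : ℤ)) ∈ relSub (e2 s₂ ν) :=
    AddSubgroup.subset_closure (Or.inr rfl)
  have h0 : (QuotientAddGroup.mk (∑ s : Sig2 s₂ ν, Finsupp.single s (1 : ℤ)) :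
      CompGrp (e2 s₂ ν)) = 0 := (QuotientAddGroup.eq_zero_iff _).2 hmem
  rw [QuotientAddGroup.mk_sum] at h0
  exact h0

lemma e2_inr (s₂ ν : ℕ) (j : Fin (2 ^ ν)) : e2 s₂ ν (Sum.inr j) = 3 := rfl
lemma e2_inl (s₂ ν : ℕ) (a : Fin s₂) : e2 s₂ ν (Sum.inl a) = 1 := rfl

lemma tPt_eq (s₂ ν : ℕ) (i : ℕ) (h1 : 1 ≤ i) (h2 : i ≤ 2 ^ ν) :
    tPt s₂ ν i = Sum.inr ⟨i - 1, by omega⟩ := by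
  unfold tPt
  congr 1
  exact Fin.ext (Nat.mod_eq_of_lt (by omega))

lemma tPt_t (s₂ ν : ℕ) (hν : 1 ≤ ν) : tPt s₂ ν (2 ^ ν - 1) = Sum.inr (jt ν) := by
  have h2 : 2 ≤ 2 ^ ν := by
    calc 2 = 2 ^ 1 := rfl
    _ ≤ 2 ^ ν := Nat.pow_le_pow_right (by norm_num) hν
  rw [tPt_eq s₂ ν _ (by omega) (by omega)]
  exact congrArg Sum.inr (Fin.ext (by simp only [jt]; omega))

lemma three_smul_eq (s₂ ν : ℕ) (i j : Fin (2 ^ ν)) :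
    (3 : ℤ) • Psi (e2 s₂ ν) (Sum.inr i) = (3 : ℤ) • Psi (e2 s₂ ν) (Sum.inr j) := by
  have := rel1 s₂ ν (Sum.inr i) (Sum.inr j)
  rwa [e2_inr, e2_inr] at this

lemma psi_inl_eq (s₂ ν : ℕ) (a : Fin s₂) :
    Psi (e2 s₂ ν) (Sum.inl a) = (3 : ℤ) • Psi (e2 s₂ ν) (Sum.inr (jt ν)) := by
  have := rel1 s₂ ν (Sum.inl a) (Sum.inr (jt ν))
  rwa [e2_inl, e2_inr, one_smul] at this

lemma threeM (s₂ ν : ℕ) : ((3 * mm s₂ ν : ℕ) : ℤ) • Psi (e2 s₂ ν) (Sum.inr (jt ν)) = 0 := by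
  set Pt := Psi (e2 s₂ ν) (Sum.inr (jt ν)) with hPt
  have hsum := rel_sum s₂ ν
  rw [Fintype.sum_sum_type] at hsum
  have h3 : (zsmulAddGroupHom (3 : ℤ)) (∑ a₁ : Fin s₂, Psi (e2 s₂ ν) (Sum.inl a₁) +
      ∑ a₂ : Fin (2 ^ ν), Psi (e2 s₂ ν) (Sum.inr a₂)) = 0 := by rw [hsum, map_zero]
  rw [map_add, map_sum, map_sum] at h3
  have h1 : ∀ a : Fin s₂, (zsmulAddGroupHom (3 : ℤ)) (Psi (e2 s₂ ν) (Sum.inl a)) = (9 : ℤ) • Pt := by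
    intro a
    show (3 : ℤ) • Psi (e2 s₂ ν) (Sum.inl a) = (9 : ℤ) • Pt
    rw [psi_inl_eq, smul_smul]
    norm_num
    rfl
  have h2 : ∀ j : Fin (2 ^ ν), (zsmulAddGroupHom (3 : ℤ)) (Psi (e2 s₂ ν) (Sum.inr j)) = (3 : ℤ) • Pt := by
    intro j
    exact three_smul_eq s₂ ν j (jt ν)
  rw [Finset.sum_congr rfl (fun a _ => h1 a), Finset.sum_congr rfl (fun j _ => h2 j)] at h3
  simp only [Finset.sum_const, Finset.card_univ, Fintype.card_fin] at h3
  rw [← natCast_zsmul, ← natCast_zsmul, smul_smul, smul_smul, ← add_zsmul] at h3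
  have : ((3 * mm s₂ ν : ℕ) : ℤ) = (s₂ : ℤ) * 9 + (2 ^ ν : ℕ) * 3 := by
    unfold mm; push_cast; ring
  rw [this]
  exact h3

lemma two_le_pow (ν : ℕ) (hν : 1 ≤ ν) : 2 ≤ 2 ^ ν := by
  calc 2 = 2 ^ 1 := rfl
  _ ≤ 2 ^ ν := Nat.pow_le_pow_right (by norm_num) hν

lemma Tval_jt (s₂ ν : ℕ) (hν : 1 ≤ ν) :
    Tval s₂ ν (Sum.inr (jt ν)) = (al s₂ ν, be s₂ ν, 0) := by
  have h2 := two_le_pow ν hν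
  have hjt : (jt ν : ℕ) = 2 ^ ν - 2 := rfl
  unfold Tval
  refine Prod.ext rfl (Prod.ext ?_ ?_)
  · show (if (jt ν : ℕ) = 2 ^ ν - 1 then be s₂ ν - 1 else be s₂ ν) = be s₂ ν
    rw [if_neg (by omega)]
  · show dl ν (jt ν) = 0
    funext k
    unfold dl
    rw [if_neg (by rintro ⟨h, -⟩; omega), if_neg (by rintro ⟨h, -⟩; omega)]
    rfl

lemma cGen0_eq (s₂ ν : ℕ) (hν : 1 ≤ ν) :
    cGen s₂ ν 0 = (3 : ℕ) • Psi (e2 s₂ ν) (Sum.inr (jt ν)) := by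
  rw [cGen, if_pos rfl, tPt_t s₂ ν hν]

lemma cGen1_eq (s₂ ν : ℕ) (hν : 1 ≤ ν) :
    cGen s₂ ν 1 = mm s₂ ν • Psi (e2 s₂ ν) (Sum.inr (jt ν)) := by
  rw [cGen, if_neg (by norm_num), if_pos rfl, tPt_t s₂ ν hν]; rfl

lemma cGenj_eq (s₂ ν : ℕ) (hν : 1 ≤ ν) (j : ℕ) (hj : 2 ≤ j) (hj2 : j ≤ 2 ^ ν - 1) :
    cGen s₂ ν j = Psi (e2 s₂ ν) (Sum.inr ⟨j - 2, by have := two_le_pow ν hν; omega⟩)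
      - Psi (e2 s₂ ν) (Sum.inr (jt ν)) := by
  have h2 := two_le_pow ν hν
  rw [cGen, if_neg (by omega), if_neg (by omega), tPt_t s₂ ν hν,
    tPt_eq s₂ ν (j - 1) (by omega) (by omega)]
  congr 2

lemma phiBar_Pt (s₂ ν : ℕ) (hs : 1 ≤ s₂) (hν : 1 ≤ ν) :
    phiBar s₂ ν hs hν (Psi (e2 s₂ ν) (Sum.inr (jt ν))) = (al s₂ ν, be s₂ ν, 0) := by
  rw [phiBar_Psi, Tval_jt s₂ ν hν]

lemma phiBar_c0 (s₂ ν : ℕ) (hs : 1 ≤ s₂) (hν : 1 ≤ ν) :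
    phiBar s₂ ν hs hν (cGen s₂ ν 0) = (1, 0, 0) := by
  rw [cGen0_eq s₂ ν hν, map_nsmul, phiBar_Pt]
  refine Prod.ext ?_ (Prod.ext ?_ ?_)
  · show (3 : ℕ) • al s₂ ν = 1
    rw [nsmul_eq_mul]
    push_cast
    exact three_mul_al s₂ ν hs hν
  · show (3 : ℕ) • be s₂ ν = 0
    rw [nsmul_eq_mul]
    have : ((3 : ℕ) : ZMod 3) = 0 := by decide
    rw [this, zero_mul]
  · show (3 : ℕ) • (0 : Fin (2 ^ ν) → ZMod 3) = 0
    rw [smul_zero]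

lemma phiBar_c1 (s₂ ν : ℕ) (hs : 1 ≤ s₂) (hν : 1 ≤ ν) :
    phiBar s₂ ν hs hν (cGen s₂ ν 1) = (0, 1, 0) := by
  rw [cGen1_eq s₂ ν hν, map_nsmul, phiBar_Pt]
  refine Prod.ext ?_ (Prod.ext ?_ ?_)
  · show mm s₂ ν • al s₂ ν = 0
    rw [nsmul_eq_mul, ZMod.natCast_self, zero_mul]
  · show mm s₂ ν • be s₂ ν = 1
    rw [nsmul_eq_mul]
    exact mm_mul_be s₂ ν
  · show mm s₂ ν • (0 : Fin (2 ^ ν) → ZMod 3) = 0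
    rw [smul_zero]

lemma phiBar_diff (s₂ ν : ℕ) (hs : 1 ≤ s₂) (hν : 1 ≤ ν) (i : ℕ) (h1 : 1 ≤ i)
    (h2 : i ≤ 2 ^ ν - 2) :
    phiBar s₂ ν hs hν (Psi (e2 s₂ ν) (Sum.inr ⟨i - 1, by have := two_le_pow ν hν; omega⟩)
        - Psi (e2 s₂ ν) (Sum.inr (jt ν)))
      = (0, 0, dl ν ⟨i - 1, by have := two_le_pow ν hν; omega⟩) := by
  have hp := two_le_pow ν hν
  rw [map_sub, phiBar_Psi, phiBar_Pt]
  unfold Tval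
  refine Prod.ext ?_ (Prod.ext ?_ ?_)
  · show al s₂ ν - al s₂ ν = 0
    rw [sub_self]
  · show (if ((⟨i - 1, _⟩ : Fin (2 ^ ν)) : ℕ) = 2 ^ ν - 1 then be s₂ ν - 1 else be s₂ ν)
        - be s₂ ν = 0
    rw [if_neg (by simp only; omega), sub_self]
  · show dl ν _ - 0 = dl ν _
    rw [sub_zero]

lemma dl_self (ν : ℕ) (i : ℕ) (hi : i < 2 ^ ν - 2) (h : i < 2 ^ ν) :
    dl ν ⟨i, h⟩ ⟨i, h⟩ = 1 := by
  unfold dl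
  rw [if_pos ⟨hi, rfl⟩]

lemma threeM_nat (s₂ ν : ℕ) :
    (3 * mm s₂ ν) • Psi (e2 s₂ ν) (Sum.inr (jt ν)) = 0 := by
  have := threeM s₂ ν
  rwa [natCast_zsmul] at this

lemma three_smul_diff (s₂ ν : ℕ) (i : Fin (2 ^ ν)) :
    (3 : ℕ) • (Psi (e2 s₂ ν) (Sum.inr i) - Psi (e2 s₂ ν) (Sum.inr (jt ν))) = 0 := by
  have hz : zsmulAddGroupHom (3 : ℤ)
      (Psi (e2 s₂ ν) (Sum.inr i) - Psi (e2 s₂ ν) (Sum.inr (jt ν))) = 0 := by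
    rw [map_sub]
    show (3 : ℤ) • Psi (e2 s₂ ν) (Sum.inr i) - (3 : ℤ) • Psi (e2 s₂ ν) (Sum.inr (jt ν)) = 0
    rw [three_smul_eq s₂ ν i (jt ν), sub_self]
  have : ((3 : ℕ) : ℤ) • (Psi (e2 s₂ ν) (Sum.inr i) - Psi (e2 s₂ ν) (Sum.inr (jt ν))) = 0 := by
    have h3 : ((3 : ℕ) : ℤ) = (3 : ℤ) := by norm_num
    rw [h3]; exact hz
  rwa [natCast_zsmul] at this

lemma ord_c0 (s₂ ν : ℕ) (hs : 1 ≤ s₂) (hν : 1 ≤ ν) :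
    addOrderOf (cGen s₂ ν 0) = mm s₂ ν := by
  apply Nat.dvd_antisymm
  · apply addOrderOf_dvd_of_nsmul_eq_zero
    rw [cGen0_eq s₂ ν hν, smul_smul, mul_comm]
    exact threeM_nat s₂ ν
  · have hmap := addOrderOf_map_dvd
      ((AddMonoidHom.fst (ZMod (mm s₂ ν)) (ZMod 3 × (Fin (2 ^ ν) → ZMod 3))).comp
        (phiBar s₂ ν hs hν)) (cGen s₂ ν 0)
    rw [AddMonoidHom.comp_apply, phiBar_c0 s₂ ν hs hν] at hmap
    have h1 : (AddMonoidHom.fst (ZMod (mm s₂ ν)) (ZMod 3 × (Fin (2 ^ ν) → ZMod 3)))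
        ((1, 0, 0) : Tgt s₂ ν) = 1 := rfl
    rw [h1, ZMod.addOrderOf_one] at hmap
    exact hmap

lemma ord_c1 (s₂ ν : ℕ) (hs : 1 ≤ s₂) (hν : 1 ≤ ν) :
    addOrderOf (cGen s₂ ν 1) = 3 := by
  apply Nat.dvd_antisymm
  · apply addOrderOf_dvd_of_nsmul_eq_zero
    rw [cGen1_eq s₂ ν hν, smul_smul]
    exact threeM_nat s₂ ν
  · have hmap := addOrderOf_map_dvd
      ((AddMonoidHom.fst (ZMod 3) (Fin (2 ^ ν) → ZMod 3)).comp
        ((AddMonoidHom.snd (ZMod (mm s₂ ν)) (ZMod 3 × (Fin (2 ^ ν) → ZMod 3))).comp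
          (phiBar s₂ ν hs hν))) (cGen s₂ ν 1)
    rw [AddMonoidHom.comp_apply, AddMonoidHom.comp_apply, phiBar_c1 s₂ ν hs hν] at hmap
    have h1 : (AddMonoidHom.fst (ZMod 3) (Fin (2 ^ ν) → ZMod 3))
        ((AddMonoidHom.snd (ZMod (mm s₂ ν)) (ZMod 3 × (Fin (2 ^ ν) → ZMod 3)))
          ((0, 1, 0) : Tgt s₂ ν)) = 1 := rfl
    rw [h1, ZMod.addOrderOf_one] at hmap
    exact hmap

lemma ord_diff (s₂ ν : ℕ) (hs : 1 ≤ s₂) (hν : 1 ≤ ν) (i : ℕ) (h1 : 1 ≤ i)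
    (h2 : i ≤ 2 ^ ν - 2) :
    addOrderOf (Psi (e2 s₂ ν) (Sum.inr ⟨i - 1, by have := two_le_pow ν hν; omega⟩)
      - Psi (e2 s₂ ν) (Sum.inr (jt ν))) = 3 := by
  have hp := two_le_pow ν hν
  set ii : Fin (2 ^ ν) := ⟨i - 1, by omega⟩ with hii
  apply Nat.dvd_antisymm
  · exact addOrderOf_dvd_of_nsmul_eq_zero (three_smul_diff s₂ ν ii)
  · have hmap := addOrderOf_map_dvd
      ((Pi.evalAddMonoidHom (fun _ : Fin (2 ^ ν) => ZMod 3) ii).comp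
        ((AddMonoidHom.snd (ZMod 3) (Fin (2 ^ ν) → ZMod 3)).comp
          ((AddMonoidHom.snd (ZMod (mm s₂ ν)) (ZMod 3 × (Fin (2 ^ ν) → ZMod 3))).comp
            (phiBar s₂ ν hs hν))))
      (Psi (e2 s₂ ν) (Sum.inr ii) - Psi (e2 s₂ ν) (Sum.inr (jt ν)))
    rw [AddMonoidHom.comp_apply, AddMonoidHom.comp_apply, AddMonoidHom.comp_apply,
      phiBar_diff s₂ ν hs hν i h1 h2] at hmap
    have hval : (Pi.evalAddMonoidHom (fun _ : Fin (2 ^ ν) => ZMod 3) ii)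
        ((AddMonoidHom.snd (ZMod 3) (Fin (2 ^ ν) → ZMod 3))
          ((AddMonoidHom.snd (ZMod (mm s₂ ν)) (ZMod 3 × (Fin (2 ^ ν) → ZMod 3)))
            ((0, 0, dl ν ii) : Tgt s₂ ν))) = dl ν ii ii := rfl
    rw [hval, dl_self ν (i - 1) (by omega) (by omega)] at hmap
    rw [ZMod.addOrderOf_one] at hmap
    exact hmap

lemma zsmul_zero_of_dvd {G : Type*} [AddCommGroup G] {c : G} {d : ℕ} {k : ℤ}
    (h : d • c = 0) (hd : (d : ℤ) ∣ k) : k • c = 0 := by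
  obtain ⟨q, rfl⟩ := hd
  rw [mul_comm, mul_smul, natCast_zsmul, h, smul_zero]

lemma sum_smul_ite {M : Type*} [AddCommGroup M] {n : ℕ} (k : Fin n → ℤ) (b : Fin n) (v : M) :
    (∑ i : Fin n, k i • (if i = b then v else 0)) = k b • v := by
  have h : ∀ i : Fin n, k i • (if i = b then v else 0) = if i = b then k i • v else 0 := by
    intro i
    split_ifs
    · rfl
    · exact smul_zero _
  rw [Finset.sum_congr rfl fun i _ => h i,
    Finset.sum_ite_eq' Finset.univ b (fun i => k i • v), if_pos (Finset.mem_univ b)]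

lemma phiBar_diff' (s₂ ν : ℕ) (hs : 1 ≤ s₂) (hν : 1 ≤ ν) (a : Fin (2 ^ ν))
    (ha : (a : ℕ) < 2 ^ ν - 2) :
    phiBar s₂ ν hs hν (Psi (e2 s₂ ν) (Sum.inr a) - Psi (e2 s₂ ν) (Sum.inr (jt ν)))
      = (0, 0, dl ν a) := by
  have hp := two_le_pow ν hν
  rw [map_sub, phiBar_Psi, phiBar_Pt]
  unfold Tval
  refine Prod.ext ?_ (Prod.ext ?_ ?_)
  · show al s₂ ν - al s₂ ν = 0
    rw [sub_self]
  · show (if (a : ℕ) = 2 ^ ν - 1 then be s₂ ν - 1 else be s₂ ν) - be s₂ ν = 0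
    rw [if_neg (by omega), sub_self]
  · show dl ν a - 0 = dl ν a
    rw [sub_zero]

lemma phiBar_cgen (s₂ ν : ℕ) (hs : 1 ≤ s₂) (hν : 1 ≤ ν) (j : ℕ) (hj : 2 ≤ j)
    (hj2 : j ≤ 2 ^ ν - 1) :
    phiBar s₂ ν hs hν (cGen s₂ ν j)
      = (0, 0, dl ν ⟨j - 2, by have := two_le_pow ν hν; omega⟩) := by
  have hp := two_le_pow ν hν
  rw [cGenj_eq s₂ ν hν j hj hj2]
  exact phiBar_diff' s₂ ν hs hν _ (by simp only; omega)

def fin0 (ν : ℕ) : Fin (2 ^ ν) := ⟨0, by positivity⟩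
def fin1 (ν : ℕ) (hν : 1 ≤ ν) : Fin (2 ^ ν) := ⟨1, by have := two_le_pow ν hν; omega⟩

lemma dl_ne (ν : ℕ) (a b : Fin (2 ^ ν)) (h1 : ¬((a : ℕ) < 2 ^ ν - 2 ∧ a = b))
    (h2 : ¬((a : ℕ) = 2 ^ ν - 1 ∧ (b : ℕ) < 2 ^ ν - 2)) : dl ν a b = 0 := by
  unfold dl
  rw [if_neg h1, if_neg h2]

lemma nsmul3_cgen (s₂ ν : ℕ) (hν : 1 ≤ ν) (j : ℕ) (hj : 2 ≤ j) (hj2 : j ≤ 2 ^ ν - 1) :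
    (3 : ℕ) • cGen s₂ ν j = 0 := by
  rw [cGenj_eq s₂ ν hν j hj hj2]
  exact three_smul_diff s₂ ν _

lemma inj_coe (s₂ ν : ℕ) (hs : 1 ≤ s₂) (hν : 1 ≤ ν) :
    Function.Injective (DirectSum.coeAddMonoidHom
      (fun i : Fin (2 ^ ν) => AddSubgroup.zmultiples (cGen s₂ ν i.val))) := by
  have hp := two_le_pow ν hν
  set A := fun i : Fin (2 ^ ν) => AddSubgroup.zmultiples (cGen s₂ ν i.val) with hA
  rw [injective_iff_map_eq_zero]
  intro x hx
  have hsum0 : ∑ i : Fin (2 ^ ν), ((x i : CompGrp (e2 s₂ ν))) = 0 := by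
    have h1 := DirectSum.sum_univ_of x
    have h2 := congrArg (DirectSum.coeAddMonoidHom A) h1
    rw [map_sum] at h2
    simp only [DirectSum.coeAddMonoidHom_of] at h2
    rw [hx] at h2
    exact (by simpa only [DirectSum.coeAddMonoidHom_of] using (show ∑ i, DirectSum.coeAddMonoidHom A (DirectSum.of (fun i => ↥(A i)) i (x i)) = 0 from h2))
  choose k hk using fun i => AddSubgroup.mem_zmultiples_iff.1 (x i).2
  have hsum : ∑ i : Fin (2 ^ ν), k i • cGen s₂ ν (i : ℕ) = 0 := by
    rw [Finset.sum_congr rfl fun i _ => hk i]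
    exact hsum0
  have happ : ∀ {M : Type} [AddCommGroup M] (F : CompGrp (e2 s₂ ν) →+ M),
      ∑ i : Fin (2 ^ ν), k i • F (cGen s₂ ν (i : ℕ)) = 0 := by
    intro M _ F
    have := congrArg F hsum
    rw [map_sum, map_zero] at this
    simpa only [map_zsmul] using this
  -- each component of x is zero
  have hxi : ∀ i : Fin (2 ^ ν), k i • cGen s₂ ν (i : ℕ) = 0 := by
    intro i
    rcases Nat.lt_or_ge (i : ℕ) 2 with hi2 | hi2
    · rcases Nat.lt_or_ge (i : ℕ) 1 with hi1 | hi1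
      · -- i = fin0
        have hieq : i = fin0 ν := Fin.ext (by show (i : ℕ) = 0; omega)
        have hF := happ ((AddMonoidHom.fst (ZMod (mm s₂ ν))
          (ZMod 3 × (Fin (2 ^ ν) → ZMod 3))).comp (phiBar s₂ ν hs hν))
        have hval : ∀ j : Fin (2 ^ ν),
            ((AddMonoidHom.fst (ZMod (mm s₂ ν)) (ZMod 3 × (Fin (2 ^ ν) → ZMod 3))).comp
              (phiBar s₂ ν hs hν)) (cGen s₂ ν (j : ℕ)) =
            (if j = fin0 ν then (1 : ZMod (mm s₂ ν)) else 0) := by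
          intro j
          rw [AddMonoidHom.comp_apply]
          rcases Nat.lt_or_ge (j : ℕ) 2 with hj2 | hj2
          · rcases Nat.lt_or_ge (j : ℕ) 1 with hj1 | hj1
            · have : j = fin0 ν := Fin.ext (by show (j : ℕ) = 0; omega)
              subst this
              rw [if_pos rfl]
              have h0 : (fin0 ν : ℕ) = 0 := rfl
              rw [h0, phiBar_c0 s₂ ν hs hν]
              rfl
            · have hj : (j : ℕ) = 1 := by omega
              rw [if_neg (by intro h; rw [h] at hj; exact absurd hj (by simp [fin0])), hj,
                phiBar_c1 s₂ ν hs hν]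
              rfl
          · rw [if_neg (by intro h; rw [h] at hj2; simp [fin0] at hj2),
              phiBar_cgen s₂ ν hs hν (j : ℕ) hj2 (by omega)]
            rfl
        rw [Finset.sum_congr rfl fun j _ => by rw [hval j], sum_smul_ite] at hF
        rw [zsmul_eq_mul, mul_one] at hF
        have hdvd : ((mm s₂ ν : ℕ) : ℤ) ∣ k (fin0 ν) :=
          (ZMod.intCast_zmod_eq_zero_iff_dvd _ _).1 hF
        rw [hieq]
        have hord : (mm s₂ ν) • cGen s₂ ν ((fin0 ν : ℕ)) = 0 := by
          have h0 : ((fin0 ν : Fin (2 ^ ν)) : ℕ) = 0 := rfl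
          rw [h0, ← ord_c0 s₂ ν hs hν]
          exact addOrderOf_nsmul_eq_zero _
        exact zsmul_zero_of_dvd hord hdvd
      · -- i = fin1
        have hieq : i = fin1 ν hν := Fin.ext (by simp [fin1]; omega)
        have hF := happ ((AddMonoidHom.fst (ZMod 3) (Fin (2 ^ ν) → ZMod 3)).comp
          ((AddMonoidHom.snd (ZMod (mm s₂ ν)) (ZMod 3 × (Fin (2 ^ ν) → ZMod 3))).comp
            (phiBar s₂ ν hs hν)))
        have hval : ∀ j : Fin (2 ^ ν),
            ((AddMonoidHom.fst (ZMod 3) (Fin (2 ^ ν) → ZMod 3)).comp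
              ((AddMonoidHom.snd (ZMod (mm s₂ ν)) (ZMod 3 × (Fin (2 ^ ν) → ZMod 3))).comp
                (phiBar s₂ ν hs hν))) (cGen s₂ ν (j : ℕ)) =
            (if j = fin1 ν hν then (1 : ZMod 3) else 0) := by
          intro j
          rw [AddMonoidHom.comp_apply, AddMonoidHom.comp_apply]
          rcases Nat.lt_or_ge (j : ℕ) 2 with hj2 | hj2
          · rcases Nat.lt_or_ge (j : ℕ) 1 with hj1 | hj1
            · have h0 : (j : ℕ) = 0 := by omega
              rw [if_neg (by intro h; rw [h] at h0; exact absurd h0 (by simp [fin1])), h0,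
                phiBar_c0 s₂ ν hs hν]
              rfl
            · have hj : (j : ℕ) = 1 := by omega
              have : j = fin1 ν hν := Fin.ext (by simp [fin1]; omega)
              subst this
              rw [if_pos rfl]
              have h1 : ((fin1 ν hν : Fin (2 ^ ν)) : ℕ) = 1 := rfl
              rw [h1, phiBar_c1 s₂ ν hs hν]
              rfl
          · rw [if_neg (by intro h; rw [h] at hj2; simp [fin1] at hj2),
              phiBar_cgen s₂ ν hs hν (j : ℕ) hj2 (by omega)]
            rfl
        rw [Finset.sum_congr rfl fun j _ => by rw [hval j], sum_smul_ite] at hF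
        rw [zsmul_eq_mul, mul_one] at hF
        have hdvd : ((3 : ℕ) : ℤ) ∣ k (fin1 ν hν) := by
          have := (ZMod.intCast_zmod_eq_zero_iff_dvd (k (fin1 ν hν)) 3).1 hF
          exact_mod_cast this
        rw [hieq]
        have hord : (3 : ℕ) • cGen s₂ ν ((fin1 ν hν : ℕ)) = 0 := by
          have h1 : ((fin1 ν hν : Fin (2 ^ ν)) : ℕ) = 1 := rfl
          rw [h1, ← ord_c1 s₂ ν hs hν]
          exact addOrderOf_nsmul_eq_zero _
        exact zsmul_zero_of_dvd hord hdvd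
    · -- 2 ≤ i
      have hilt : (i : ℕ) ≤ 2 ^ ν - 1 := by have := i.isLt; omega
      set a : Fin (2 ^ ν) := ⟨(i : ℕ) - 2, by have := i.isLt; omega⟩ with ha
      have hF := happ ((Pi.evalAddMonoidHom (fun _ : Fin (2 ^ ν) => ZMod 3) a).comp
        ((AddMonoidHom.snd (ZMod 3) (Fin (2 ^ ν) → ZMod 3)).comp
          ((AddMonoidHom.snd (ZMod (mm s₂ ν)) (ZMod 3 × (Fin (2 ^ ν) → ZMod 3))).comp
            (phiBar s₂ ν hs hν))))
      have hval : ∀ j : Fin (2 ^ ν),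
          ((Pi.evalAddMonoidHom (fun _ : Fin (2 ^ ν) => ZMod 3) a).comp
            ((AddMonoidHom.snd (ZMod 3) (Fin (2 ^ ν) → ZMod 3)).comp
              ((AddMonoidHom.snd (ZMod (mm s₂ ν)) (ZMod 3 × (Fin (2 ^ ν) → ZMod 3))).comp
                (phiBar s₂ ν hs hν)))) (cGen s₂ ν (j : ℕ)) =
          (if j = i then (1 : ZMod 3) else 0) := by
        intro j
        rw [AddMonoidHom.comp_apply, AddMonoidHom.comp_apply, AddMonoidHom.comp_apply]
        rcases Nat.lt_or_ge (j : ℕ) 2 with hj2 | hj2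
        · rcases Nat.lt_or_ge (j : ℕ) 1 with hj1 | hj1
          · have h0 : (j : ℕ) = 0 := by omega
            rw [if_neg (by intro h; rw [h] at h0; omega), h0, phiBar_c0 s₂ ν hs hν]
            rfl
          · have hj : (j : ℕ) = 1 := by omega
            rw [if_neg (by intro h; rw [h] at hj; omega), hj, phiBar_c1 s₂ ν hs hν]
            rfl
        · rw [phiBar_cgen s₂ ν hs hν (j : ℕ) hj2 (by have := j.isLt; omega)]
          show dl ν ⟨(j : ℕ) - 2, _⟩ a = _
          by_cases hji : j = i
          · subst hji
            rw [if_pos rfl]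
            exact dl_self ν ((j : ℕ) - 2) (by have := j.isLt; omega) _
          · rw [if_neg hji]
            apply dl_ne
            · rintro ⟨-, h⟩
              apply hji
              apply Fin.ext
              have : (j : ℕ) - 2 = (i : ℕ) - 2 := congrArg Fin.val h
              omega
            · rintro ⟨h, -⟩
              simp only at h
              have := j.isLt
              omega
      rw [Finset.sum_congr rfl fun j _ => by rw [hval j], sum_smul_ite] at hF
      rw [zsmul_eq_mul, mul_one] at hF
      have hdvd : ((3 : ℕ) : ℤ) ∣ k i := by
        have := (ZMod.intCast_zmod_eq_zero_iff_dvd (k i) 3).1 hF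
        exact_mod_cast this
      exact zsmul_zero_of_dvd (nsmul3_cgen s₂ ν hν (i : ℕ) hi2 hilt) hdvd
  -- conclude x = 0
  refine DFinsupp.ext fun i => Subtype.ext ?_
  have h0 : (((0 : DirectSum (Fin (2 ^ ν)) fun i => ↥(A i)) i : ↥(A i)) : CompGrp (e2 s₂ ν)) = 0 := by
    rw [DirectSum.zero_apply, ZeroMemClass.coe_zero]
  show ((x i : CompGrp (e2 s₂ ν))) = _
  rw [h0, ← hk i]
  exact hxi i

lemma surj_coe (s₂ ν : ℕ) (hs : 1 ≤ s₂) (hν : 1 ≤ ν) :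
    Function.Surjective (DirectSum.coeAddMonoidHom
      (fun i : Fin (2 ^ ν) => AddSubgroup.zmultiples (cGen s₂ ν i.val))) := by
  have hp := two_le_pow ν hν
  set A := fun i : Fin (2 ^ ν) => AddSubgroup.zmultiples (cGen s₂ ν i.val) with hA
  set R := AddMonoidHom.range (G := DirectSum (Fin (2 ^ ν)) fun i => ↥(A i)) (DirectSum.coeAddMonoidHom A) with hR
  have hc : ∀ i : Fin (2 ^ ν), cGen s₂ ν (i : ℕ) ∈ R := by
    intro i
    exact ⟨DirectSum.of (fun i => ↥(A i)) i ⟨cGen s₂ ν (i : ℕ), AddSubgroup.mem_zmultiples _⟩,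
      DirectSum.coeAddMonoidHom_of A i _⟩
  have hc0 : cGen s₂ ν 0 ∈ R := hc (fin0 ν)
  have hc1 : cGen s₂ ν 1 ∈ R := hc (fin1 ν hν)
  -- Ψt ∈ R via Bézout
  have hPt : Psi (e2 s₂ ν) (Sum.inr (jt ν)) ∈ R := by
    set Pt := Psi (e2 s₂ ν) (Sum.inr (jt ν)) with hPtdef
    have hgcd : Int.gcd ((3 : ℕ) : ℤ) ((mm s₂ ν : ℕ) : ℤ) = 1 := by
      rw [Int.gcd_natCast_natCast]
      exact coprime3 s₂ ν
    have hbez := Int.gcd_eq_gcd_ab ((3 : ℕ) : ℤ) ((mm s₂ ν : ℕ) : ℤ)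
    rw [hgcd] at hbez
    have h3Pt : ((3 : ℕ) : ℤ) • Pt = cGen s₂ ν 0 := by
      rw [natCast_zsmul, cGen0_eq s₂ ν hν]
    have hmPt : ((mm s₂ ν : ℕ) : ℤ) • Pt = cGen s₂ ν 1 := by
      rw [natCast_zsmul, cGen1_eq s₂ ν hν]
    have hPt_eq : Pt = Int.gcdA 3 (mm s₂ ν) • cGen s₂ ν 0
        + Int.gcdB 3 (mm s₂ ν) • cGen s₂ ν 1 := by
      rw [← h3Pt, ← hmPt, smul_smul, smul_smul]
      have : Pt = (1 : ℤ) • Pt := (one_smul ℤ Pt).symm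
      rw [this]
      rw [← add_zsmul]
      congr 1
      push_cast at hbez ⊢
      rw [hbez]
      ring
    rw [hPt_eq]
    exact AddSubgroup.add_mem R (AddSubgroup.zsmul_mem R hc0 _) (AddSubgroup.zsmul_mem R hc1 _)
  have hinl : ∀ a : Fin s₂, Psi (e2 s₂ ν) (Sum.inl a) ∈ R := by
    intro a
    rw [psi_inl_eq]
    have : (3 : ℤ) • Psi (e2 s₂ ν) (Sum.inr (jt ν)) = cGen s₂ ν 0 := by
      rw [cGen0_eq s₂ ν hν, ← natCast_zsmul]
      norm_num
    rw [this]
    exact hc0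
  have hsmall : ∀ j : Fin (2 ^ ν), (j : ℕ) ≤ 2 ^ ν - 2 → Psi (e2 s₂ ν) (Sum.inr j) ∈ R := by
    intro j hj
    rcases Nat.lt_or_ge (j : ℕ) (2 ^ ν - 2) with hlt | hge
    · have hceq := cGenj_eq s₂ ν hν ((j : ℕ) + 2) (by omega) (by omega)
      have hfin : (⟨(j : ℕ) + 2 - 2, by have := j.isLt; omega⟩ : Fin (2 ^ ν)) = j :=
        Fin.ext rfl
      rw [hfin] at hceq
      have : Psi (e2 s₂ ν) (Sum.inr j) = cGen s₂ ν ((j : ℕ) + 2)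
          + Psi (e2 s₂ ν) (Sum.inr (jt ν)) := by
        rw [hceq, sub_add_cancel]
      rw [this]
      exact AddSubgroup.add_mem R (hc ⟨(j : ℕ) + 2, by omega⟩) hPt
    · have : j = jt ν := Fin.ext (by simp only [jt]; omega)
      rw [this]
      exact hPt
  have hinr : ∀ j : Fin (2 ^ ν), Psi (e2 s₂ ν) (Sum.inr j) ∈ R := by
    intro j
    rcases Nat.lt_or_ge (j : ℕ) (2 ^ ν - 1) with hlt | hge
    · exact hsmall j (by omega)
    · -- j is the last index
      have hsum := rel_sum s₂ ν
      rw [Fintype.sum_sum_type] at hsum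
      have h2 : ∑ a : Fin s₂, Psi (e2 s₂ ν) (Sum.inl a)
          + (Psi (e2 s₂ ν) (Sum.inr j)
            + ∑ j' ∈ Finset.univ.erase j, Psi (e2 s₂ ν) (Sum.inr j')) = 0 := by
        have herase := Finset.add_sum_erase Finset.univ
          (fun x : Fin (2 ^ ν) => Psi (e2 s₂ ν) (Sum.inr x)) (Finset.mem_univ j)
        rw [herase]
        exact hsum
      have h3 : Psi (e2 s₂ ν) (Sum.inr j)
          + (∑ a : Fin s₂, Psi (e2 s₂ ν) (Sum.inl a)
            + ∑ j' ∈ Finset.univ.erase j, Psi (e2 s₂ ν) (Sum.inr j')) = 0 := by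
        rw [← h2]; abel
      have h4 := eq_neg_of_add_eq_zero_left h3
      rw [h4]
      apply AddSubgroup.neg_mem
      apply AddSubgroup.add_mem
      · exact AddSubgroup.sum_mem R fun a _ => hinl a
      · apply AddSubgroup.sum_mem R
        intro j' hj'
        have hne : j' ≠ j := Finset.ne_of_mem_erase hj'
        have : (j' : ℕ) ≤ 2 ^ ν - 2 := by
          have h5 := j'.isLt
          have h6 := j.isLt
          have : (j' : ℕ) ≠ (j : ℕ) := fun h => hne (Fin.ext h)
          omega
        exact hsmall j' this
  have hpsi : ∀ s : Sig2 s₂ ν, Psi (e2 s₂ ν) s ∈ R := by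
    rintro (a | j)
    · exact hinl a
    · exact hinr j
  intro y
  refine QuotientAddGroup.induction_on y fun f => ?_
  have hmem : (QuotientAddGroup.mk f : CompGrp (e2 s₂ ν)) ∈ R := by
    have hf : f = ∑ s ∈ f.support, Finsupp.single s (f s) := by
      conv_lhs => rw [← Finsupp.sum_single f]
      rfl
    rw [hf, QuotientAddGroup.mk_sum]
    apply AddSubgroup.sum_mem R
    intro s _
    have hterm : (QuotientAddGroup.mk (Finsupp.single s (f s)) : CompGrp (e2 s₂ ν))
        = f s • Psi (e2 s₂ ν) s := by
      rw [Psi, ← QuotientAddGroup.mk_zsmul, Finsupp.smul_single, smul_eq_mul, mul_one]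
    rw [hterm]
    exact AddSubgroup.zsmul_mem R (hpsi s) _
  exact hmem

/-- `G(Σ, e)` is the internal direct sum
`⟨3Ψt⟩ ⊕ ⟨mΨt⟩ ⊕ ⨁_{i=1}^{2^ν-2} ⟨Ψ t_i - Ψ t⟩`, where `⟨3Ψt⟩` is cyclic of order
`m = 3s₂ + 2^ν`, `⟨mΨt⟩` is cyclic of order `3`, and each `⟨Ψ t_i - Ψ t⟩` is cyclic of
order `3`. -/
theorem stmt6 (s₂ ν : ℕ) (hs : 1 ≤ s₂) (hν : 1 ≤ ν) :
    DirectSum.IsInternal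
      (fun i : Fin (2 ^ ν) => AddSubgroup.zmultiples (cGen s₂ ν i.val)) ∧
    addOrderOf (cGen s₂ ν 0) = 3 * s₂ + 2 ^ ν ∧
    addOrderOf (cGen s₂ ν 1) = 3 ∧
    (∀ i : ℕ, 1 ≤ i → i ≤ 2 ^ ν - 2 →
      addOrderOf (Psi (e2 s₂ ν) (tPt s₂ ν i) - Psi (e2 s₂ ν) (tPt s₂ ν (2 ^ ν - 1))) = 3) := by
  have hp := two_le_pow ν hν
  refine ⟨⟨inj_coe s₂ ν hs hν, surj_coe s₂ ν hs hν⟩, ord_c0 s₂ ν hs hν, ord_c1 s₂ ν hs hν, ?_⟩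
  intro i h1 h2
  rw [tPt_eq s₂ ν i h1 (by omega), tPt_t s₂ ν hν]
  exact ord_diff s₂ ν hs hν i h1 h2
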